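/- Let b ≥ 1 and let n = 2^s with s ≥ 2 (so n ≥ 4). Every nb × nb block butterfly matrix of block size b is also an nb × nb block butterfly matrix of block size 2b; that is, if M can be written as a product B_n^{(n,b)} B_{n/2}^{(n,b)} ⋯ B_2^{(n,b)} of block butterfly factor matrices of block size b, then M can also be written as a product B_{n/2}^{(n/2,2b)} B_{n/4}^{(n/2,2b)} ⋯ B_2^{(n/2,2b)} of block butterfly factor matrices of block size 2b. -/

import Mathlib

/-- A matrix `M` of size `N × N` (thought of as `n·b × n·b`) is a *block butterfly factor
matrix* of stride `k` and block size `b` if its support is contained in the block-diagonal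
pattern of `n/k` block butterfly factors of size `k·b`: the `b`-block indices `⌊i/b⌋` and
`⌊j/b⌋` of any nonzero entry must lie in the same size-`k` group and agree modulo `k/2`. -/
def IsBFactorMatrix {N : ℕ} (k b : ℕ) (M : Matrix (Fin N) (Fin N) ℝ) : Prop :=
  ∀ i j : Fin N, M i j ≠ 0 →
    ((i : ℕ) / b) / k = ((j : ℕ) / b) / k ∧
    ((i : ℕ) / b) % (k / 2) = ((j : ℕ) / b) % (k / 2)

/-- `M` is a block butterfly matrix with `n = 2^s` diagonal blocks of block size `b`:
a product `B_n^{(n,b)} B_{n/2}^{(n,b)} ⋯ B_2^{(n,b)}` of block butterfly factor matrices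
with strides `2^s, 2^{s-1}, …, 2`. -/
def IsBlockButterfly {N : ℕ} (s b : ℕ) (M : Matrix (Fin N) (Fin N) ℝ) : Prop :=
  ∃ F : Fin s → Matrix (Fin N) (Fin N) ℝ,
    (∀ i : Fin s, IsBFactorMatrix (2 ^ (s - (i : ℕ))) b (F i)) ∧
    M = (List.ofFn F).prod

/-- Step-down: a factor of stride `2^m` (`m ≥ 2`) and block size `b` is a factor of stride
`2^(m-1)` and block size `2b`. -/
lemma stepA {N m b : ℕ} (hm : 2 ≤ m) {M : Matrix (Fin N) (Fin N) ℝ}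
    (h : IsBFactorMatrix (2 ^ m) b M) : IsBFactorMatrix (2 ^ (m - 1)) (2 * b) M := by
  obtain ⟨u, rfl⟩ : ∃ u, m = u + 2 := ⟨m - 2, by omega⟩
  intro i j hij
  obtain ⟨h1, h2⟩ := h i j hij
  have hd : ∀ x : ℕ, x / (2 * b) = x / b / 2 := by
    intro x; rw [Nat.div_div_eq_div_mul, mul_comm]
  have hm1 : u + 2 - 1 = u + 1 := rfl
  rw [hm1]
  constructor
  · have e : ∀ x : ℕ, x / (2 * b) / 2 ^ (u + 1) = x / b / 2 ^ (u + 2) := by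
      intro x
      rw [hd, Nat.div_div_eq_div_mul, Nat.div_div_eq_div_mul,
        show b * (2 * 2 ^ (u + 1)) = b * 2 ^ (u + 2) by ring, ← Nat.div_div_eq_div_mul]
    rw [e, e]; exact h1
  · have hp : ∀ v : ℕ, (2 : ℕ) ^ (v + 1) / 2 = 2 ^ v := by
      intro v; rw [pow_succ]; exact Nat.mul_div_cancel _ two_pos
    rw [hp]
    rw [hp] at h2
    have e : ∀ x : ℕ, x / (2 * b) % 2 ^ u = x / b % 2 ^ (u + 1) / 2 := by
      intro x
      rw [hd, ← Nat.mod_mul_right_div_self,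
        show 2 * 2 ^ u = 2 ^ (u + 1) by rw [pow_succ]; ring]
    rw [e, e, h2]

/-- A factor of stride 2, block size `b` is also (trivially) a factor of stride 2,
block size `2b` (it is block diagonal with `2b`-blocks, hence with `4b`-blocks). -/
lemma stepB {N b : ℕ} {M : Matrix (Fin N) (Fin N) ℝ}
    (h : IsBFactorMatrix 2 b M) : IsBFactorMatrix 2 (2 * b) M := by
  intro i j hij
  obtain ⟨h1, _⟩ := h i j hij
  have hd : ∀ x : ℕ, x / (2 * b) = x / b / 2 := by
    intro x; rw [Nat.div_div_eq_div_mul, mul_comm]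
  refine ⟨?_, by simp [Nat.mod_one]⟩
  rw [hd, hd, h1]

/-- The product of two stride-2 factor matrices is a stride-2 factor matrix. -/
lemma stepC {N c : ℕ} {G H : Matrix (Fin N) (Fin N) ℝ}
    (hG : IsBFactorMatrix 2 c G) (hH : IsBFactorMatrix 2 c H) :
    IsBFactorMatrix 2 c (G * H) := by
  intro i j hij
  rw [Matrix.mul_apply] at hij
  obtain ⟨l, hl⟩ := Finset.exists_ne_zero_of_sum_ne_zero hij
  have h1 := (hG i l (left_ne_zero_of_mul hl.2)).1
  have h2 := (hH l j (right_ne_zero_of_mul hl.2)).1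
  exact ⟨h1.trans h2, by simp [Nat.mod_one]⟩

theorem block_butterfly_double_block_size (b s : ℕ) (hb : 1 ≤ b) (hs : 2 ≤ s)
    (M : Matrix (Fin (2 ^ s * b)) (Fin (2 ^ s * b)) ℝ)
    (h : IsBlockButterfly s b M) :
    IsBlockButterfly (s - 1) (2 * b) M := by
  obtain ⟨t, rfl⟩ : ∃ t, s = t + 2 := ⟨s - 2, by omega⟩
  obtain ⟨F, hF, hM⟩ := h
  show IsBlockButterfly (t + 1) (2 * b) M
  refine ⟨Fin.snoc (fun i : Fin t => F i.castSucc.castSucc)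
    (F (Fin.last t).castSucc * F (Fin.last (t + 1))), ?_, ?_⟩
  · intro i
    refine Fin.lastCases ?_ ?_ i
    · simp only [Fin.val_last, Fin.snoc_last]
      have e : t + 1 - t = 1 := by omega
      rw [e, pow_one]
      refine stepC ?_ ?_
      · have h1 := hF (Fin.last t).castSucc
        simp only [Fin.coe_castSucc, Fin.val_last] at h1
        have e2 : t + 2 - t = 2 := by omega
        rw [e2] at h1
        have := stepA (m := 2) le_rfl h1
        simpa using this
      · have h1 := hF (Fin.last (t + 1))
        simp only [Fin.val_last] at h1
        have e2 : t + 2 - (t + 1) = 1 := by omega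
        rw [e2, pow_one] at h1
        exact stepB h1
    · intro i
      simp only [Fin.coe_castSucc, Fin.snoc_castSucc]
      have h1 := hF i.castSucc.castSucc
      simp only [Fin.coe_castSucc] at h1
      have e : t + 1 - (i : ℕ) = (t + 2 - (i : ℕ)) - 1 := by omega
      rw [e]
      exact stepA (by omega) h1
  · rw [hM]
    rw [List.ofFn_succ' F, List.prod_concat,
      List.ofFn_succ' (fun i : Fin (t + 1) => F i.castSucc), List.prod_concat,
      List.ofFn_succ', List.prod_concat]
    simp [Fin.snoc_castSucc, Fin.snoc_last, mul_assoc]
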